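/- arXiv:1605.09598 — 9 statements merged into one kernel-verified Lean document; each statement's English description precedes it below -/
import Mathlib

section
/- Let K be a field and let L be a field extension of K with a K-basis b : Basis (Fin ρ₁) K L. For β ∈ L let M β := Algebra.leftMulMatrix b β. Let H₁ : Matrix (Fin ρ₁) (Fin n₁) K and H₂ : Matrix (Fin ρ₂) (Fin n₂) L, and let T : Matrix ((Fin ρ₂) × (Fin ρ₁)) ((Fin n₂) × (Fin n₁)) K be the expanded tensor-product parity check matrix, T (i,r) (j,c) = (M (H₂ i j) * H₁) r c. If H₁ * H₁ᵀ = 0 (i.e., the component code C₁ is Euclidean dual-containing), then T * Tᵀ = 0 (i.e., the tensor product code C₂ ⊗_H C₁ is Euclidean dual-containing). -/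
open Matrix

/-- Lemma 7(i) of the paper: if the binary/quaternary component code `C₁` with parity check
matrix `H₁` is Euclidean dual-containing (`H₁ * H₁ᵀ = 0`), then the expanded tensor-product
parity check matrix `T` of `C₂ ⊗_H C₁` satisfies `T * Tᵀ = 0`. -/
theorem stmt0 {K L : Type*} [Field K] [Field L] [Algebra K L]
    {ρ₁ n₁ ρ₂ n₂ : ℕ} (b : Module.Basis (Fin ρ₁) K L)
    (H₁ : Matrix (Fin ρ₁) (Fin n₁) K) (H₂ : Matrix (Fin ρ₂) (Fin n₂) L)
    (T : Matrix (Fin ρ₂ × Fin ρ₁) (Fin n₂ × Fin n₁) K)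
    (hT : ∀ i r j c, T (i, r) (j, c) = (Algebra.leftMulMatrix b (H₂ i j) * H₁) r c)
    (h1 : H₁ * H₁ᵀ = 0) :
    T * Tᵀ = 0 := by
  ext ⟨i, r⟩ ⟨i', r'⟩
  simp only [mul_apply, transpose_apply, Matrix.zero_apply, Fintype.sum_prod_type]
  have key : ∀ j : Fin n₂,
      ∑ c, T (i, r) (j, c) * T (i', r') (j, c) = 0 := by
    intro j
    have : ∑ c, T (i, r) (j, c) * T (i', r') (j, c)
        = ((Algebra.leftMulMatrix b (H₂ i j) * H₁) *
          (Algebra.leftMulMatrix b (H₂ i' j) * H₁)ᵀ) r r' := by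
      rw [mul_apply]
      refine Finset.sum_congr rfl fun c _ => ?_
      rw [hT, hT, transpose_apply]
    rw [this, transpose_mul, ← Matrix.mul_assoc, Matrix.mul_assoc
      (Algebra.leftMulMatrix b (H₂ i j)) H₁, h1, Matrix.mul_zero, Matrix.zero_mul,
      Matrix.zero_apply]
  simp [key]
end

section
/- Let K be a field and let L be a field extension of K with a K-basis b : Basis (Fin ρ₁) K L. For β ∈ L let M β := Algebra.leftMulMatrix b β. Let H₂ : Matrix (Fin ρ₂) (Fin n₂) L and let ψH₂ : Matrix ((Fin ρ₂) × (Fin ρ₁)) (Fin n₂) K be its coordinate expansion, ψH₂ (i,r) j = b.repr (H₂ i j) r. Assume ψH₂ * ψH₂ᵀ = 0 (i.e., the subfield expansion ψ(C₂) is Euclidean dual-containing). Then for EVERY matrix H₁ : Matrix (Fin ρ₁) (Fin n₁) K (no dual-containing condition on C₁), the expanded tensor-product parity check matrix T, defined by T (i,r) (j,c) = (M (H₂ i j) * H₁) r c, satisfies T * Tᵀ = 0. -/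
open Matrix

private lemma sum_mul_sum_swap {ι κ M : Type*} [Fintype ι] [Fintype κ] [CommRing M]
    (f g : κ → ι → M) :
    ∑ x, (∑ t, f t x) * (∑ t, g t x) = ∑ t, ∑ t', ∑ x, f t x * g t' x := by
  simp only [Finset.sum_mul_sum]
  rw [Finset.sum_comm]
  exact Finset.sum_congr rfl fun t _ => Finset.sum_comm

/-- Lemma 7(ii) of the paper: if the subfield expansion `ψ(C₂)` of the component code `C₂`
over the extension field is Euclidean dual-containing (`ψH₂ * ψH₂ᵀ = 0`), then for every
matrix `H₁` the expanded tensor-product parity check matrix `T` satisfies `T * Tᵀ = 0`. -/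
theorem stmt1 {K L : Type*} [Field K] [Field L] [Algebra K L]
    {ρ₁ n₁ ρ₂ n₂ : ℕ} (b : Module.Basis (Fin ρ₁) K L)
    (H₂ : Matrix (Fin ρ₂) (Fin n₂) L)
    (ψH₂ : Matrix (Fin ρ₂ × Fin ρ₁) (Fin n₂) K)
    (hψ : ∀ i r j, ψH₂ (i, r) j = b.repr (H₂ i j) r)
    (h2 : ψH₂ * ψH₂ᵀ = 0) :
    ∀ (H₁ : Matrix (Fin ρ₁) (Fin n₁) K)
      (T : Matrix (Fin ρ₂ × Fin ρ₁) (Fin n₂ × Fin n₁) K),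
      (∀ i r j c, T (i, r) (j, c) = (Algebra.leftMulMatrix b (H₂ i j) * H₁) r c) →
      T * Tᵀ = 0 := by
  intro H₁ T hT
  set A : Fin ρ₁ → Matrix (Fin ρ₁) (Fin n₁) K :=
    fun t => Algebra.leftMulMatrix b (b t) * H₁ with hA
  have hT' : ∀ i r j c, T (i, r) (j, c) = ∑ t, ψH₂ (i, t) j * A t r c := by
    intro i r j c
    rw [hT]
    have hM : Algebra.leftMulMatrix b (H₂ i j)
        = ∑ t, b.repr (H₂ i j) t • Algebra.leftMulMatrix b (b t) := by
      conv_lhs => rw [← b.sum_repr (H₂ i j)]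
      rw [map_sum]
      exact Finset.sum_congr rfl fun t _ => map_smul _ _ _
    rw [hM, Matrix.sum_mul, Matrix.sum_apply]
    exact Finset.sum_congr rfl fun t _ => by
      rw [hψ, Matrix.smul_mul, Matrix.smul_apply, smul_eq_mul, hA]
  have h0 : ∀ i i' t t', ∑ j, ψH₂ (i, t) j * ψH₂ (i', t') j = 0 := fun i i' t t' => by
    have := congrFun (congrFun h2 (i, t)) (i', t')
    simpa [Matrix.mul_apply] using this
  ext ⟨i, r⟩ ⟨i', r'⟩
  rw [Matrix.mul_apply, Matrix.zero_apply]
  calc ∑ x, T (i, r) x * Tᵀ x (i', r')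
      = ∑ x : Fin n₂ × Fin n₁,
          (∑ t, ψH₂ (i, t) x.1 * A t r x.2) * (∑ t, ψH₂ (i', t) x.1 * A t r' x.2) :=
        Finset.sum_congr rfl fun ⟨j, c⟩ _ => by
          rw [Matrix.transpose_apply, hT', hT']
    _ = ∑ t, ∑ t', ∑ x : Fin n₂ × Fin n₁,
          (ψH₂ (i, t) x.1 * A t r x.2) * (ψH₂ (i', t') x.1 * A t' r' x.2) :=
        sum_mul_sum_swap _ _
    _ = ∑ t, ∑ t', (∑ j, ψH₂ (i, t) j * ψH₂ (i', t') j) * (∑ c, A t r c * A t' r' c) := by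
        refine Finset.sum_congr rfl fun t _ => Finset.sum_congr rfl fun t' _ => ?_
        rw [Fintype.sum_prod_type, Finset.sum_mul_sum]
        exact Finset.sum_congr rfl fun j _ => Finset.sum_congr rfl fun c _ => by ring
    _ = 0 := by simp [h0]
end

section
/- Let K := GaloisField 2 2 be the field with four elements and conj : K → K, conj x = x², its Frobenius automorphism. Let L be a field extension of K with a K-basis b : Basis (Fin ρ₁) K L, and for β ∈ L let M β := Algebra.leftMulMatrix b β. Let H₁ : Matrix (Fin ρ₁) (Fin n₁) K satisfy H₁ * (H₁.map conj)ᵀ = 0 (i.e., the quaternary component code C₁ is Hermitian dual-containing), and let H₂ : Matrix (Fin ρ₂) (Fin n₂) L be arbitrary. Then the expanded tensor-product parity check matrix T, defined by T (i,r) (j,c) = (M (H₂ i j) * H₁) r c, satisfies T * (T.map conj)ᵀ = 0 (i.e., the tensor product code is Hermitian dual-containing). -/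
open Matrix

/-- Hermitian version of Lemma 7(i): if the quaternary component code `C₁` with parity check
matrix `H₁` is Hermitian dual-containing (`H₁ * (H₁.map conj)ᵀ = 0` with `conj x = x²`), then
the expanded tensor-product parity check matrix `T` satisfies `T * (T.map conj)ᵀ = 0`. -/
theorem stmt2 {L : Type*} [Field L] [Algebra (GaloisField 2 2) L]
    {ρ₁ n₁ ρ₂ n₂ : ℕ} (b : Module.Basis (Fin ρ₁) (GaloisField 2 2) L)
    (conj : GaloisField 2 2 → GaloisField 2 2) (hconj : ∀ x, conj x = x ^ 2)
    (H₁ : Matrix (Fin ρ₁) (Fin n₁) (GaloisField 2 2))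
    (h1 : H₁ * (H₁.map conj)ᵀ = 0)
    (H₂ : Matrix (Fin ρ₂) (Fin n₂) L)
    (T : Matrix (Fin ρ₂ × Fin ρ₁) (Fin n₂ × Fin n₁) (GaloisField 2 2))
    (hT : ∀ i r j c, T (i, r) (j, c) = (Algebra.leftMulMatrix b (H₂ i j) * H₁) r c) :
    T * (T.map conj)ᵀ = 0 := by
  have hc : conj = ⇑(frobenius (GaloisField 2 2) 2) := by
    funext x; rw [hconj, frobenius_def]
  subst hc
  set φ := frobenius (GaloisField 2 2) 2 with hφ
  -- key block computation
  have key : ∀ (A A' : Matrix (Fin ρ₁) (Fin ρ₁) (GaloisField 2 2)),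
      (A * H₁) * (((A' * H₁).map φ)ᵀ) = 0 := by
    intro A A'
    rw [Matrix.map_mul, transpose_mul, ← Matrix.mul_assoc, Matrix.mul_assoc A,
      h1, Matrix.mul_zero, Matrix.zero_mul]
  ext ⟨i, r⟩ ⟨i', r'⟩
  have : (T * (T.map φ)ᵀ) (i, r) (i', r')
      = ∑ j : Fin n₂, ((Algebra.leftMulMatrix b (H₂ i j) * H₁) *
          (((Algebra.leftMulMatrix b (H₂ i' j) * H₁)).map φ)ᵀ) r r' := by
    simp only [Matrix.mul_apply, Matrix.transpose_apply, Matrix.map_apply,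
      Fintype.sum_prod_type, hT]
  rw [this]
  simp only [key, Matrix.zero_apply, Finset.sum_const_zero]
end

section
/- Let K := GaloisField 2 2 be the field with four elements and conj : K → K, conj x = x², its Frobenius automorphism. Let L be a field extension of K with a K-basis b : Basis (Fin ρ₁) K L, and for β ∈ L let M β := Algebra.leftMulMatrix b β. Let H₂ : Matrix (Fin ρ₂) (Fin n₂) L and let ψH₂ be its coordinate expansion, ψH₂ (i,r) j = b.repr (H₂ i j) r. Assume ψH₂ * ((ψH₂).map conj)ᵀ = 0 (i.e., the subfield expansion ψ(C₂) is Hermitian dual-containing). Then for EVERY matrix H₁ : Matrix (Fin ρ₁) (Fin n₁) K, the expanded tensor-product parity check matrix T, defined by T (i,r) (j,c) = (M (H₂ i j) * H₁) r c, satisfies T * (T.map conj)ᵀ = 0. -/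
open Matrix

lemma aux4 {R : Type*} [CommRing R] {α β γ : Type*} [Fintype α] [Fintype β] [Fintype γ]
    (u v : γ → α → R) (p q : γ → β → R)
    (h : ∀ t t', ∑ j, u t j * v t' j = 0) :
    ∑ j, ∑ c, (∑ t, u t j * p t c) * (∑ t', v t' j * q t' c) = 0 := by
  have : ∑ j, ∑ c, (∑ t, u t j * p t c) * (∑ t', v t' j * q t' c)
      = ∑ t, ∑ t', (∑ j, u t j * v t' j) * (∑ c, p t c * q t' c) := by
    simp_rw [Finset.sum_mul_sum]
    conv_lhs => enter [2, j]; rw [Finset.sum_comm]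
    conv_lhs => enter [2, j, 2, t]; rw [Finset.sum_comm]
    rw [Finset.sum_comm]
    conv_lhs => enter [2, t]; rw [Finset.sum_comm]
    apply Finset.sum_congr rfl; intro t _
    apply Finset.sum_congr rfl; intro t' _
    apply Finset.sum_congr rfl; intro j _
    apply Finset.sum_congr rfl; intro c _
    ring
  rw [this]
  simp [h]


/-- Hermitian version of Lemma 7(ii): if the subfield expansion `ψ(C₂)` is Hermitian
dual-containing, then for every matrix `H₁` the expanded tensor-product parity check
matrix `T` satisfies `T * (T.map conj)ᵀ = 0`. -/
theorem stmt3 {L : Type*} [Field L] [Algebra (GaloisField 2 2) L]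
    {ρ₁ n₁ ρ₂ n₂ : ℕ} (b : Module.Basis (Fin ρ₁) (GaloisField 2 2) L)
    (conj : GaloisField 2 2 → GaloisField 2 2) (hconj : ∀ x, conj x = x ^ 2)
    (H₂ : Matrix (Fin ρ₂) (Fin n₂) L)
    (ψH₂ : Matrix (Fin ρ₂ × Fin ρ₁) (Fin n₂) (GaloisField 2 2))
    (hψ : ∀ i r j, ψH₂ (i, r) j = b.repr (H₂ i j) r)
    (h2 : ψH₂ * ((ψH₂).map conj)ᵀ = 0) :
    ∀ (H₁ : Matrix (Fin ρ₁) (Fin n₁) (GaloisField 2 2))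
      (T : Matrix (Fin ρ₂ × Fin ρ₁) (Fin n₂ × Fin n₁) (GaloisField 2 2)),
      (∀ i r j c, T (i, r) (j, c) = (Algebra.leftMulMatrix b (H₂ i j) * H₁) r c) →
      T * (T.map conj)ᵀ = 0 := by
  intro H₁ T hT
  have hf : conj = ⇑(frobenius (GaloisField 2 2) 2) := by
    funext x; rw [hconj, frobenius_def]
  have key : ∀ i i' t t',
      ∑ j, b.repr (H₂ i j) t * conj (b.repr (H₂ i' j) t') = 0 := by
    intro i i' t t'
    have := congrFun (congrFun h2 (i, t)) (i', t')
    simpa [Matrix.mul_apply, Matrix.transpose_apply, Matrix.map_apply, hψ] using this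
  have repr_mul : ∀ (x : L) (s r : Fin ρ₁),
      b.repr (x * b s) r = ∑ t, b.repr x t * b.repr (b t * b s) r := by
    intro x s r
    conv_lhs => rw [← b.sum_repr x]
    rw [Finset.sum_mul, map_sum, Finset.sum_apply']
    apply Finset.sum_congr rfl; intro t _
    rw [smul_mul_assoc, _root_.map_smul, Finsupp.smul_apply, smul_eq_mul]
  set G : Fin ρ₁ → Fin ρ₁ → Fin n₁ → GaloisField 2 2 :=
    fun t r c => ∑ s, b.repr (b t * b s) r * H₁ s c with hG
  have hTG : ∀ i r j c, T (i, r) (j, c) = ∑ t, b.repr (H₂ i j) t * G t r c := by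
    intro i r j c
    rw [hT, Matrix.mul_apply]
    conv_lhs => enter [2, s]; rw [Algebra.leftMulMatrix_eq_repr_mul, repr_mul]
    simp only [hG]
    simp_rw [Finset.sum_mul, Finset.mul_sum, mul_assoc]
    rw [Finset.sum_comm]
  ext ⟨i, r⟩ ⟨i', r'⟩
  rw [Matrix.mul_apply, Matrix.zero_apply]
  rw [Fintype.sum_prod_type]
  simp only [Matrix.transpose_apply, Matrix.map_apply]
  have hsplit : ∀ (j : Fin n₂) (c : Fin n₁),
      T (i, r) (j, c) * conj (T (i', r') (j, c))
      = (∑ t, b.repr (H₂ i j) t * G t r c)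
        * (∑ t', conj (b.repr (H₂ i' j) t') * conj (G t' r' c)) := by
    intro j c
    rw [hTG, hTG, hf, map_sum]
    simp_rw [_root_.map_mul]
  simp_rw [hsplit]
  exact aux4 (fun t j => b.repr (H₂ i j) t) (fun t' j => conj (b.repr (H₂ i' j) t'))
    (fun t c => G t r c) (fun t' c => conj (G t' r' c)) (fun t t' => key i i' t t')
end

section
/- Let K be a field and let L be a field extension of K with a K-basis b : Basis (Fin ρ₁) K L; for β ∈ L let M β := Algebra.leftMulMatrix b β (the companion-matrix representation). Let H₁ : Matrix (Fin ρ₁) (Fin n₁) K and suppose there is a matrix Lmat : Matrix (Fin ρ₁) (Fin ρ₁) K with Lmat * (H₁ * H₁ᵀ) = 1 (i.e., H₁ * H₁ᵀ is invertible). Let H₂ : Matrix (Fin ρ₂) (Fin n₂) L satisfy H₂ * H₂ᵀ = 0 (i.e., the component code C₂ over the extension field is dual-containing). Define A, B : Matrix ((Fin ρ₂) × (Fin ρ₁)) ((Fin n₂) × (Fin n₁)) K by A (i,r) (j,c) = (M (H₂ i j) * Lmat * H₁) r c and B (i,r) (j,c) = ((M (H₂ i j))ᵀ * H₁) r c. Then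 A * Bᵀ = 0 (so the tensor product code with parity check matrix B contains the code dual to the code with parity check matrix A). -/
open Matrix

/-- Theorem 9 of the paper (key matrix identity): if `H₁ * H₁ᵀ` is invertible with inverse
`Lmat` and the component code `C₂` over the extension field is dual-containing
(`H₂ * H₂ᵀ = 0`), then the modified expanded parity check matrix `A` (blocks
`[H₂ i j] · Lmat · H₁`) and the expanded parity check matrix `B` (blocks `[H₂ i j]ᵀ · H₁`)
satisfy `A * Bᵀ = 0`. -/
theorem stmt4 {K L : Type*} [Field K] [Field L] [Algebra K L]
    {ρ₁ n₁ ρ₂ n₂ : ℕ} (b : Module.Basis (Fin ρ₁) K L)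
    (H₁ : Matrix (Fin ρ₁) (Fin n₁) K)
    (Lmat : Matrix (Fin ρ₁) (Fin ρ₁) K)
    (hL : Lmat * (H₁ * H₁ᵀ) = 1)
    (H₂ : Matrix (Fin ρ₂) (Fin n₂) L)
    (h2 : H₂ * H₂ᵀ = 0)
    (A B : Matrix (Fin ρ₂ × Fin ρ₁) (Fin n₂ × Fin n₁) K)
    (hA : ∀ i r j c, A (i, r) (j, c) = (Algebra.leftMulMatrix b (H₂ i j) * Lmat * H₁) r c)
    (hB : ∀ i r j c, B (i, r) (j, c) = ((Algebra.leftMulMatrix b (H₂ i j))ᵀ * H₁) r c) :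
    A * Bᵀ = 0 := by
  ext ⟨i, r⟩ ⟨i', r'⟩
  simp only [mul_apply, transpose_apply, Matrix.zero_apply, Fintype.sum_prod_type]
  have key : ∀ j : Fin n₂,
      ∑ c : Fin n₁, A (i, r) (j, c) * B (i', r') (j, c)
        = Algebra.leftMulMatrix b (H₂ i j * H₂ i' j) r r' := by
    intro j
    have : ∑ c : Fin n₁, A (i, r) (j, c) * B (i', r') (j, c)
        = (Algebra.leftMulMatrix b (H₂ i j) * Lmat * H₁ *
            ((Algebra.leftMulMatrix b (H₂ i' j))ᵀ * H₁)ᵀ) r r' := by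
      rw [mul_apply]
      exact Finset.sum_congr rfl fun c _ => by
        rw [hA, hB, transpose_apply]
    rw [this, transpose_mul, transpose_transpose, _root_.map_mul]
    have : Algebra.leftMulMatrix b (H₂ i j) * Lmat * H₁ *
            (H₁ᵀ * Algebra.leftMulMatrix b (H₂ i' j))
        = Algebra.leftMulMatrix b (H₂ i j) * (Lmat * (H₁ * H₁ᵀ)) *
            Algebra.leftMulMatrix b (H₂ i' j) := by
      simp only [Matrix.mul_assoc]
    rw [this, hL, mul_one]
  rw [Finset.sum_congr rfl fun j _ => key j]
  have hsum : ∑ j, H₂ i j * H₂ i' j = 0 := by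
    have := congrFun (congrFun h2 i) i'
    simpa [mul_apply] using this
  rw [← Matrix.sum_apply, ← map_sum, hsum, map_zero]
  simp
end

section
/- For every natural number t ≥ 1, the sum ∑_{d ∣ t, d odd} μ(d) · 2^{t/d} is strictly positive, where μ is the Möbius function and the sum ranges over the odd divisors d of t. (Consequently, N₂(2t) = (1/(2t)) ∑_{d ∣ t, d odd} μ(d) 2^{t/d}, the number of self-reciprocal irreducible polynomials of degree 2t over GF(2), is positive, so a self-reciprocal irreducible polynomial of every even degree exists.) -/
lemma geomsum_aux (n : ℕ) : ∑ j ∈ Finset.range n, (2:ℤ) ^ j = 2 ^ n - 1 := by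
  induction n with
  | zero => simp
  | succ n ih => rw [Finset.sum_range_succ, ih]; ring

/-- For every `t ≥ 1`, the sum `∑_{d ∣ t, d odd} μ(d) · 2^{t/d}` is strictly positive; hence
the number `N₂(2t)` of self-reciprocal irreducible polynomials of degree `2t` over `GF(2)`
is positive. -/
theorem stmt9 (t : ℕ) (ht : 1 ≤ t) :
    0 < ∑ d ∈ t.divisors.filter (fun d => Odd d),
      (ArithmeticFunction.moebius d) * 2 ^ (t / d) := by
  set S := t.divisors.filter (fun d => Odd d) with hS
  have h1 : (1:ℕ) ∈ S := by
    simp [hS, Nat.mem_divisors]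
    omega
  rw [← Finset.add_sum_erase _ _ h1]
  have hmu1 : (ArithmeticFunction.moebius 1 : ℤ) = 1 := by simp
  rw [hmu1, Nat.div_one, one_mul]
  have hbound : |∑ d ∈ S.erase 1, (ArithmeticFunction.moebius d : ℤ) * 2 ^ (t / d)|
      ≤ 2 ^ t - 1 := by
    calc |∑ d ∈ S.erase 1, (ArithmeticFunction.moebius d : ℤ) * 2 ^ (t / d)|
        ≤ ∑ d ∈ S.erase 1, |(ArithmeticFunction.moebius d : ℤ) * 2 ^ (t / d)| :=
          Finset.abs_sum_le_sum_abs _ _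
      _ ≤ ∑ d ∈ S.erase 1, (2:ℤ) ^ (t / d) := by
          apply Finset.sum_le_sum
          intro d _
          rw [abs_mul, abs_pow]
          have h : |(ArithmeticFunction.moebius d : ℤ)| ≤ 1 :=
            ArithmeticFunction.abs_moebius_le_one
          have h2 : (0:ℤ) ≤ |(2:ℤ)| ^ (t / d) := by positivity
          rw [abs_two] at h2 ⊢
          nlinarith
      _ = ∑ j ∈ (S.erase 1).image (fun d => t / d), (2:ℤ) ^ j := by
          rw [Finset.sum_image]
          intro a ha b hb hab
          have haT : a ∣ t :=
            (Nat.mem_divisors.mp (Finset.mem_filter.mp (Finset.mem_of_mem_erase ha)).1).1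
          have hbT : b ∣ t :=
            (Nat.mem_divisors.mp (Finset.mem_filter.mp (Finset.mem_of_mem_erase hb)).1).1
          have ea := Nat.div_div_self haT (by omega)
          have eb := Nat.div_div_self hbT (by omega)
          calc a = t / (t / a) := ea.symm
            _ = t / (t / b) := by rw [show t / a = t / b from hab]
            _ = b := eb
      _ ≤ ∑ j ∈ Finset.range t, (2:ℤ) ^ j := by
          apply Finset.sum_le_sum_of_subset_of_nonneg
          · intro j hj
            simp only [Finset.mem_image, Finset.mem_range] at hj ⊢
            obtain ⟨d, hd, rfl⟩ := hj
            have hd1 : d ≠ 1 := Finset.ne_of_mem_erase hd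
            have hdT : d ∣ t :=
              (Nat.mem_divisors.mp (Finset.mem_filter.mp (Finset.mem_of_mem_erase hd)).1).1
            have hd0 : d ≠ 0 := by rintro rfl; omega
            exact Nat.div_lt_self (by omega) (by omega)
          · intros; positivity
      _ = 2 ^ t - 1 := geomsum_aux t
  have := abs_le.mp hbound
  linarith [this.1]
end

section
/- Let n ≥ 2 and let H : Matrix (Fin (n-1)) (Fin n) (ZMod 2) be any parity check matrix of the binary repetition code of length n, i.e., H.mulVec (fun _ => 1) = 0 and the rows of H are linearly independent (H has rank n − 1). Then H * Hᵀ is invertible (IsUnit (H * Hᵀ)) if and only if n is odd. (This is the fact, used in the construction of quantum tensor product codes from repetition codes, that the repetition code of odd length is reversible and its parity check matrix satisfies the full-rank condition H H^T invertible.) -/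
open Matrix

/-- For any full-row-rank parity check matrix `H` of the binary repetition code of length
`n ≥ 2`, the Gram matrix `H * Hᵀ` is invertible if and only if `n` is odd. -/
theorem stmt10 (n : ℕ) (hn : 2 ≤ n) (H : Matrix (Fin (n - 1)) (Fin n) (ZMod 2))
    (hker : H.mulVec (fun _ => 1) = 0)
    (hrows : LinearIndependent (ZMod 2) (fun i => H i)) :
    IsUnit (H * Hᵀ) ↔ Odd n := by
  classical
  have hne : Nonempty (Fin n) := ⟨⟨0, by omega⟩⟩
  have h20 : (2 : ZMod 2) = 0 := by decide
  -- the coordinate-sum linear map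
  set f : (Fin n → ZMod 2) →ₗ[ZMod 2] ZMod 2 := ∑ i, LinearMap.proj i with hfdef
  have hfapp : ∀ x : Fin n → ZMod 2, f x = ∑ i, x i := by
    intro x; simp [hfdef]
  have hfsurj : Function.Surjective f := by
    intro c
    refine ⟨Pi.single (Classical.arbitrary (Fin n)) c, ?_⟩
    rw [hfapp]
    simp
  have hker_f : Module.finrank (ZMod 2) (LinearMap.ker f) = n - 1 := by
    have h1 := LinearMap.finrank_range_add_finrank_ker f
    rw [LinearMap.range_eq_top.mpr hfsurj, finrank_top] at h1
    simp only [Module.finrank_self, Module.finrank_fintype_fun_eq_card,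
      Fintype.card_fin] at h1
    omega
  -- the row space of H
  set W : Submodule (ZMod 2) (Fin n → ZMod 2) := Submodule.span (ZMod 2) (Set.range H)
    with hWdef
  have hWle : W ≤ LinearMap.ker f := by
    rw [hWdef, Submodule.span_le]
    rintro _ ⟨i, rfl⟩
    rw [SetLike.mem_coe, LinearMap.mem_ker, hfapp]
    have := congr_fun hker i
    simpa [mulVec, dotProduct] using this
  have hWrank : Module.finrank (ZMod 2) W = n - 1 := by
    have h2 := linearIndependent_iff_card_eq_finrank_span.mp hrows
    simp only [Fintype.card_fin, Set.finrank] at h2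
    rw [hWdef, ← h2]
  have hWeq : W = LinearMap.ker f :=
    Submodule.eq_of_le_of_finrank_le hWle (by rw [hker_f, hWrank])
  -- the kernel of mulVec H is spanned by the all-ones vector
  have hones_ne : (fun _ => (1 : ZMod 2) : Fin n → ZMod 2) ≠ 0 := by
    intro h
    have := congr_fun h ⟨0, by omega⟩
    simp at this
  have hrank : H.rank = n - 1 := by
    have := hrows.rank_matrix
    simpa using this
  have hkerH : LinearMap.ker H.mulVecLin
      = Submodule.span (ZMod 2) {(fun _ => 1 : Fin n → ZMod 2)} := by
    have hle : Submodule.span (ZMod 2) {(fun _ => 1 : Fin n → ZMod 2)}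
        ≤ LinearMap.ker H.mulVecLin := by
      rw [Submodule.span_le, Set.singleton_subset_iff]
      simpa [Matrix.mulVecLin_apply] using hker
    have h1 := LinearMap.finrank_range_add_finrank_ker H.mulVecLin
    have hrange : Module.finrank (ZMod 2) (LinearMap.range H.mulVecLin) = n - 1 := hrank
    simp only [Module.finrank_fintype_fun_eq_card, Fintype.card_fin] at h1
    have hkrank : Module.finrank (ZMod 2) (LinearMap.ker H.mulVecLin) = 1 := by omega
    refine (Submodule.eq_of_le_of_finrank_le hle ?_).symm
    rw [hkrank, finrank_span_singleton hones_ne]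
  -- vecMul lands in the row space
  have hvw : ∀ v : Fin (n - 1) → ZMod 2, v ᵥ* H ∈ W := by
    intro v
    rw [hWdef, show Set.range H = Set.range (Matrix.row H) from rfl, ← range_vecMulLinear]
    exact ⟨v, rfl⟩
  rw [Matrix.isUnit_iff_isUnit_det]
  constructor
  · -- contrapositive: n even → det = 0
    intro hdet
    by_contra hodd
    have heven : Even n := Nat.not_odd_iff_even.mp hodd
    -- the all-ones vector lies in ker f, hence in W
    have h1W : (fun _ => (1 : ZMod 2) : Fin n → ZMod 2) ∈ W := by
      rw [hWeq, LinearMap.mem_ker, hfapp]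
      have hcast : ((n : ℕ) : ZMod 2) = 0 := by
        obtain ⟨k, hk⟩ := heven
        subst hk
        push_cast
        rw [← two_mul, h20, zero_mul]
      simpa using hcast
    obtain ⟨c, hc⟩ : ∃ c, c ᵥ* H = (fun _ => (1 : ZMod 2)) := by
      rw [hWdef, show Set.range H = Set.range (Matrix.row H) from rfl, ← range_vecMulLinear] at h1W
      obtain ⟨c, hc⟩ := h1W
      exact ⟨c, hc⟩
    have hc0 : c ≠ 0 := by
      intro h
      rw [h, Matrix.zero_vecMul] at hc
      exact hones_ne hc.symm
    have hz : (H * Hᵀ) *ᵥ c = 0 := by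
      rw [← Matrix.mulVec_mulVec, Matrix.mulVec_transpose, hc, hker]
    rw [Matrix.exists_mulVec_eq_zero_iff.mp ⟨c, hc0, hz⟩] at hdet
    simp at hdet
  · -- n odd → det ≠ 0 → IsUnit
    intro hodd
    rw [isUnit_iff_ne_zero]
    intro hdet
    obtain ⟨v, hv0, hv⟩ := Matrix.exists_mulVec_eq_zero_iff.mpr hdet
    set w : Fin n → ZMod 2 := v ᵥ* H with hwdef
    have hw : H *ᵥ w = 0 := by
      rw [hwdef, ← Matrix.mulVec_transpose, Matrix.mulVec_mulVec]
      exact hv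
    have hwker : w ∈ LinearMap.ker H.mulVecLin := by
      rw [LinearMap.mem_ker, Matrix.mulVecLin_apply]
      exact hw
    rw [hkerH, Submodule.mem_span_singleton] at hwker
    obtain ⟨c, hc⟩ := hwker
    have hwf : f w = 0 := hWle (hvw v)
    have hn1 : ((n : ℕ) : ZMod 2) = 1 := by
      obtain ⟨k, hk⟩ := hodd
      subst hk
      push_cast
      rw [h20]
      ring
    have hcz : c = 0 := by
      rw [← hc, hfapp] at hwf
      simp only [Pi.smul_apply, smul_eq_mul, mul_one, Finset.sum_const,
        Finset.card_univ, Fintype.card_fin, nsmul_eq_mul, hn1, one_mul] at hwf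
      exact hwf
    have hwz : w = 0 := by rw [← hc, hcz, zero_smul]
    have hvH : v ᵥ* H = (0 : Fin (n - 1) → ZMod 2) ᵥ* H := by
      rw [Matrix.zero_vecMul]; exact hwz
    exact hv0 (Matrix.vecMul_injective_iff.mpr hrows hvH)
end

section
/- Let K := GaloisField 2 2 be the field with four elements and conj : K → K, conj x = x², its Frobenius automorphism. Let H : Matrix (Fin ρ) (Fin n) K and let D := {x : Fin n → K | H.mulVec x = 0} be the corresponding quaternary linear code. Let D^{⊥h} := {v : Fin n → K | ∀ u ∈ D, ∑ i, u i * (v i)^2 = 0} be the Hermitian dual of D. Then D^{⊥h} ≤ D if and only if H * (H.map conj)ᵀ = 0 (i.e., H H† = 0, where H† denotes the conjugate transpose). -/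
open Matrix

private lemma gf4_pow_four (x : GaloisField 2 2) : (x ^ 2) ^ 2 = x := by
  haveI : Fintype (GaloisField 2 2) := Fintype.ofFinite _
  have hcard : Fintype.card (GaloisField 2 2) = 4 := by
    have := GaloisField.card 2 2 (by norm_num)
    rw [Nat.card_eq_fintype_card] at this
    omega
  have h := FiniteField.pow_card x
  rw [hcard] at h
  rw [← pow_mul]
  simpa using h

private lemma gf4_sq_sum {ι : Type*} (s : Finset ι) (f : ι → GaloisField 2 2) :
    (∑ i ∈ s, f i) ^ 2 = ∑ i ∈ s, (f i) ^ 2 := by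
  have h := map_sum (frobenius (GaloisField 2 2) 2) f s
  simp only [frobenius_def] at h
  exact h

/-- The Hermitian dual-containing criterion over `GF(4)`: `D^{⊥h} ⊆ D` holds if and only if
`H * H† = 0`, where `D` is the kernel of `H`, the Hermitian inner product is
`(u,v)_h = ∑ i, u i * (v i)²`, and `H† = (H.map (·²))ᵀ`. -/
theorem stmt12 {ρ n : ℕ} (H : Matrix (Fin ρ) (Fin n) (GaloisField 2 2))
    (conj : GaloisField 2 2 → GaloisField 2 2) (hconj : ∀ x, conj x = x ^ 2) :
    {v : Fin n → GaloisField 2 2 |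
        ∀ u ∈ {u : Fin n → GaloisField 2 2 | H.mulVec u = 0}, ∑ i, u i * (v i) ^ 2 = 0} ⊆
        {x : Fin n → GaloisField 2 2 | H.mulVec x = 0} ↔
      H * (H.map conj)ᵀ = 0 := by
  constructor
  · intro hsub
    ext k j
    have hmem : (fun i => conj (H j i)) ∈
        {v : Fin n → GaloisField 2 2 |
          ∀ u ∈ {u : Fin n → GaloisField 2 2 | H.mulVec u = 0},
            ∑ i, u i * (v i) ^ 2 = 0} := by
      intro u hu
      have heq : ∀ i, u i * (conj (H j i)) ^ 2 = H j i * u i := by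
        intro i
        rw [hconj, gf4_pow_four, mul_comm]
      simp only [heq]
      have := congrFun hu j
      simpa [Matrix.mulVec, dotProduct] using this
    have h0 := congrFun (hsub hmem) k
    simpa [Matrix.mul_apply, Matrix.mulVec, dotProduct, Matrix.map_apply] using h0
  · intro hHH v hv
    -- the functional u ↦ ∑ i, u i * (v i)^2
    let Kf : (Fin n → GaloisField 2 2) →ₗ[GaloisField 2 2] GaloisField 2 2 :=
      { toFun := fun u => ∑ i, u i * (v i) ^ 2
        map_add' := by
          intro a b
          simp [add_mul, Finset.sum_add_distrib]
        map_smul' := by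
          intro c a
          simp [Finset.mul_sum, mul_assoc] }
    let L : Fin ρ → ((Fin n → GaloisField 2 2) →ₗ[GaloisField 2 2] GaloisField 2 2) := fun j =>
      (LinearMap.proj j).comp H.mulVecLin
    have hker : ⨅ j, LinearMap.ker (L j) ≤ LinearMap.ker Kf := by
      intro u hu
      simp only [Submodule.mem_iInf, LinearMap.mem_ker, LinearMap.comp_apply,
        LinearMap.proj_apply, Matrix.mulVecLin_apply, L] at hu
      exact hv u (funext fun x => hu x)
    have hspan := mem_span_of_iInf_ker_le_ker (L := L) (K := Kf) hker
    obtain ⟨c, hc⟩ := (Submodule.mem_span_range_iff_exists_fun (GaloisField 2 2)).1 hspan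
    -- evaluate at Pi.single i 1 : (v i)^2 = ∑ j, c j * H j i
    have hvi : ∀ i, (v i) ^ 2 = ∑ j, c j * H j i := by
      intro i
      have h1 := congrFun (congrArg DFunLike.coe hc) (Pi.single i 1)
      simp only [LinearMap.coe_sum, Finset.sum_apply, LinearMap.smul_apply,
        LinearMap.comp_apply, LinearMap.proj_apply, Matrix.mulVecLin_apply, smul_eq_mul,
        L, Kf, LinearMap.coe_mk, AddHom.coe_mk, Matrix.mulVec_single, mul_one] at h1
      rw [Finset.sum_eq_single i (fun b _ hb => by simp [Pi.single_eq_of_ne hb]) (by simp)] at h1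
      rw [Pi.single_eq_same, one_mul] at h1
      simpa using h1.symm
    have hvexp : ∀ i, v i = ∑ j, (c j) ^ 2 * (H j i) ^ 2 := by
      intro i
      have h2 := congrArg (fun x : GaloisField 2 2 => x ^ 2) (hvi i)
      rw [gf4_pow_four] at h2
      rw [h2, gf4_sq_sum]
      simp [mul_pow]
    show H.mulVec v = 0
    funext k
    calc H.mulVec v k = ∑ i, H k i * v i := by
          simp [Matrix.mulVec, dotProduct]
      _ = ∑ i, ∑ j, (c j) ^ 2 * (H k i * conj (H j i)) := by
          apply Finset.sum_congr rfl
          intro i _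
          rw [hvexp i, Finset.mul_sum]
          apply Finset.sum_congr rfl
          intro j _
          rw [hconj]
          ring
      _ = ∑ j, (c j) ^ 2 * ∑ i, H k i * conj (H j i) := by
          rw [Finset.sum_comm]
          simp [Finset.mul_sum]
      _ = ∑ j, (c j) ^ 2 * (H * (H.map conj)ᵀ) k j := by
          apply Finset.sum_congr rfl
          intro j _
          simp [Matrix.mul_apply, Matrix.transpose_apply, Matrix.map_apply]
      _ = 0 := by simp [hHH]
end

section
/- Let K be a field and let H₁ : Matrix (Fin ρ₁) (Fin n₁) K and H₂ : Matrix (Fin ρ₂) (Fin n₂) K be parity check matrices of two linear codes over the SAME field, and let H := H₁ ⊗ₖ H₂ be their Kronecker (tensor) product, a (ρ₁ρ₂) × (n₁n₂) matrix over K. Then H * Hᵀ = 0 if and only if H₁ * H₁ᵀ = 0 or H₂ * H₂ᵀ = 0. (Equivalently: the tensor product code with parity check matrix H₁ ⊗ₖ H₂ is Euclidean dual-containing if and only if C₁ is Euclidean dual-containing or C₂ is Euclidean dual-containing.) -/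
open Matrix

open Kronecker

lemma kron_eq_zero_iff {K : Type*} [Field K] {a b c d : ℕ}
    (A : Matrix (Fin a) (Fin b) K) (B : Matrix (Fin c) (Fin d) K) :
    A ⊗ₖ B = 0 ↔ A = 0 ∨ B = 0 := by
  constructor
  · intro h
    by_cases hA : A = 0
    · exact Or.inl hA
    · right
      obtain ⟨i, j, hij⟩ : ∃ i j, A i j ≠ 0 := by
        by_contra hc
        push_neg at hc
        exact hA (Matrix.ext fun i j => hc i j)
      ext k l
      have := congrFun (congrFun h (i, k)) (j, l)
      simp [Matrix.kroneckerMap_apply] at this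
      rcases this with h | h
      · exact absurd h hij
      · simp [h]
  · rintro (rfl | rfl) <;> simp
/-- Lemma 6 of the paper (same-field tensor product codes, Grassl–Rötteler): the Kronecker
product parity check matrix `H₁ ⊗ₖ H₂` satisfies `H * Hᵀ = 0` if and only if
`H₁ * H₁ᵀ = 0` or `H₂ * H₂ᵀ = 0`. -/
theorem stmt13 {K : Type*} [Field K] {ρ₁ n₁ ρ₂ n₂ : ℕ}
    (H₁ : Matrix (Fin ρ₁) (Fin n₁) K) (H₂ : Matrix (Fin ρ₂) (Fin n₂) K) :
    (H₁ ⊗ₖ H₂) * (H₁ ⊗ₖ H₂)ᵀ = 0 ↔ H₁ * H₁ᵀ = 0 ∨ H₂ * H₂ᵀ = 0 := by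
  rw [← Matrix.kroneckerMap_transpose, ← Matrix.mul_kronecker_mul]
  exact kron_eq_zero_iff _ _
end
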